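/- Let $m$ be a positive integer, $K \ge 0$, $\gamma = m^2 + K$, $T > 0$, $u_m(x,t) = m\sin(mx)\,e^{-\gamma t}\,\frac{e^{2\gamma t}-1}{2\gamma}$ and $F_m(x,t) = -\cos(mx)e^{\gamma t}$. Then $\left(\int_{-\pi}^{\pi} u_m(x,T)^2\,dx\right) \cdot \left(\int_0^T \int_{-\pi}^{\pi} F_m(x,t)^2\,dx\,dt\right)^{-1} = \frac{m^2}{2\gamma}\,(1 - e^{-2\gamma T})$. -/

import Mathlib

open Real intervalIntegral

lemma sin_sq_int (m : ℕ) (hm : 0 < m) :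
    (∫ x in (-Real.pi)..Real.pi, Real.sin ((m : ℝ) * x) ^ 2) = Real.pi := by
  have hmne : (m : ℝ) ≠ 0 := Nat.cast_ne_zero.mpr hm.ne'
  have := intervalIntegral.integral_comp_mul_left (a := -Real.pi) (b := Real.pi)
    (c := (m : ℝ)) (fun y => Real.sin y ^ 2) hmne
  rw [this, integral_sin_sq]
  have h1 : Real.sin ((m : ℝ) * Real.pi) = 0 := by
    simpa using Real.sin_int_mul_pi (m : ℤ)
  have h2 : Real.sin ((m : ℝ) * -Real.pi) = 0 := by
    have : (m : ℝ) * -Real.pi = (-(m : ℤ) : ℝ) * Real.pi := by push_cast; ring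
    rw [this]; simpa using Real.sin_int_mul_pi (-(m : ℤ))
  rw [h1, h2]
  field_simp
  rw [smul_eq_mul]; linear_combination π * inv_mul_cancel₀ hmne

lemma cos_sq_int (m : ℕ) (hm : 0 < m) :
    (∫ x in (-Real.pi)..Real.pi, Real.cos ((m : ℝ) * x) ^ 2) = Real.pi := by
  have hmne : (m : ℝ) ≠ 0 := Nat.cast_ne_zero.mpr hm.ne'
  have := intervalIntegral.integral_comp_mul_left (a := -Real.pi) (b := Real.pi)
    (c := (m : ℝ)) (fun y => Real.cos y ^ 2) hmne
  rw [this, integral_cos_sq]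
  have h1 : Real.sin ((m : ℝ) * Real.pi) = 0 := by
    simpa using Real.sin_int_mul_pi (m : ℤ)
  have h2 : Real.sin ((m : ℝ) * -Real.pi) = 0 := by
    have : (m : ℝ) * -Real.pi = (-(m : ℤ) : ℝ) * Real.pi := by push_cast; ring
    rw [this]; simpa using Real.sin_int_mul_pi (-(m : ℤ))
  rw [h1, h2]
  field_simp
  rw [smul_eq_mul]; linear_combination π * inv_mul_cancel₀ hmne

/-- the ratio of the squared `L₂(-π,π)`-norm of `u_m(·,T)` to the squared
`L₂((-π,π)×(0,T))`-norm of `F_m` equals `m²/(2γ) (1 - e^{-2γT})`. -/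
theorem stmt_3 (m : ℕ) (hm : 0 < m) (K : ℝ) (hK : 0 ≤ K)
    (γ : ℝ) (hγ : γ = (m : ℝ) ^ 2 + K) (T : ℝ) (hT : 0 < T)
    (u F : ℝ → ℝ → ℝ)
    (hu : ∀ x t, u x t =
      (m : ℝ) * Real.sin ((m : ℝ) * x) * Real.exp (-γ * t) *
        ((Real.exp (2 * γ * t) - 1) / (2 * γ)))
    (hF : ∀ x t, F x t = -Real.cos ((m : ℝ) * x) * Real.exp (γ * t)) :
    (∫ x in (-Real.pi)..Real.pi, (u x T) ^ 2) *
        (∫ t in (0:ℝ)..T, ∫ x in (-Real.pi)..Real.pi, (F x t) ^ 2)⁻¹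
      = (m : ℝ) ^ 2 / (2 * γ) * (1 - Real.exp (-2 * γ * T)) := by
  have hm1 : (1 : ℝ) ≤ (m : ℝ) := by exact_mod_cast hm
  have hγpos : 0 < γ := by
    rw [hγ]; positivity
  have h2γ : (2 * γ) ≠ 0 := by positivity
  -- left integral
  have hI1 : (∫ x in (-Real.pi)..Real.pi, (u x T) ^ 2)
      = (m : ℝ) ^ 2 * (Real.exp (-γ * T)) ^ 2 *
        ((Real.exp (2 * γ * T) - 1) / (2 * γ)) ^ 2 * Real.pi := by
    simp only [hu]
    have : ∀ x : ℝ, ((m : ℝ) * Real.sin ((m : ℝ) * x) * Real.exp (-γ * T) *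
        ((Real.exp (2 * γ * T) - 1) / (2 * γ))) ^ 2
        = ((m : ℝ) ^ 2 * (Real.exp (-γ * T)) ^ 2 *
          ((Real.exp (2 * γ * T) - 1) / (2 * γ)) ^ 2) * Real.sin ((m : ℝ) * x) ^ 2 := by
      intro x; ring
    simp only [this]
    rw [intervalIntegral.integral_const_mul, sin_sq_int m hm]
  -- inner integral of F²
  have hInner : ∀ t : ℝ, (∫ x in (-Real.pi)..Real.pi, (F x t) ^ 2)
      = Real.pi * Real.exp (2 * γ * t) := by
    intro t
    simp only [hF]
    have : ∀ x : ℝ, (-Real.cos ((m : ℝ) * x) * Real.exp (γ * t)) ^ 2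
        = (Real.exp (γ * t)) ^ 2 * Real.cos ((m : ℝ) * x) ^ 2 := by intro x; ring
    simp only [this]
    rw [intervalIntegral.integral_const_mul, cos_sq_int m hm,
      ← Real.exp_nat_mul]
    ring_nf
  have hI2 : (∫ t in (0:ℝ)..T, ∫ x in (-Real.pi)..Real.pi, (F x t) ^ 2)
      = Real.pi * ((Real.exp (2 * γ * T) - 1) / (2 * γ)) := by
    simp only [hInner]
    rw [intervalIntegral.integral_const_mul]
    congr 1
    have := intervalIntegral.integral_comp_mul_left (a := (0:ℝ)) (b := T)
      (c := 2 * γ) Real.exp h2γ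
    rw [this, integral_exp]
    simp [smul_eq_mul]
    ring
  rw [hI1, hI2]
  have hpi : Real.pi ≠ 0 := Real.pi_ne_zero
  have hE : Real.exp (2 * γ * T) - 1 ≠ 0 := by
    have : 1 < Real.exp (2 * γ * T) := by
      rw [Real.one_lt_exp_iff]; positivity
    linarith
  have hexp : Real.exp (-2 * γ * T) = (Real.exp (-γ * T)) ^ 2 := by
    rw [← Real.exp_nat_mul]; congr 1; ring
  have hexp2 : Real.exp (-γ * T) * Real.exp (γ * T) = 1 := by
    rw [← Real.exp_add]; simp
  have hprod : Real.exp (-2 * γ * T) * Real.exp (2 * γ * T) = 1 := by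
    rw [← Real.exp_add, show -2 * γ * T + 2 * γ * T = 0 by ring, Real.exp_zero]
  have key : 1 - Real.exp (-2 * γ * T)
      = (Real.exp (-γ * T)) ^ 2 * (Real.exp (2 * γ * T) - 1) := by
    rw [← hexp, mul_sub, hprod, mul_one]
  rw [key]
  field_simp
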